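/- (Poincaré inequality for symmetric Lévy measures) Let Ω ⊆ ℝⁿ be a nonempty bounded open set and let ν be a symmetric Lévy measure on ℝⁿ with ν(ℝⁿ∖{0}) > 0. Then there exists a constant C = C(ν, Ω) > 0 such that ‖u‖²_{L²(Ω)} ≤ C ⟨u,u⟩_ν for every u ∈ H_ν^Ω(ℝⁿ). -/

import Mathlib

open MeasureTheory Filter Set Topology
open scoped ENNReal Topology Pointwise Classical

noncomputable section

abbrev Eucl (n : ℕ) : Type := EuclideanSpace ℝ (Fin n)

/-- A symmetric Lévy measure on ℝⁿ: ν({0}) = 0, ν(−A) = ν(A) for Borel A, and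
∫ min(1,|y|²) dν < ∞. -/
def IsSymmLevy {n : ℕ} (ν : Measure (Eucl n)) : Prop :=
  ν {0} = 0 ∧ (∀ A : Set (Eucl n), MeasurableSet A → ν (-A) = ν A) ∧
    (∫⁻ y, ENNReal.ofReal (min 1 (‖y‖ ^ 2)) ∂ν) < ⊤

/-- The truncated nonlocal operator: ∫_{|y| ≥ ε} (u(x) − u(x+y)) dν(y). -/
def truncL {n : ℕ} (ν : Measure (Eucl n)) (u : Eucl n → ℝ) (x : Eucl n) (ε : ℝ) : ℝ :=
  ∫ y in {y : Eucl n | ε ≤ ‖y‖}, (u x - u (x + y)) ∂ν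

/-- `Lu(x)` is well defined with value `l`: the integrands are ν-integrable away from the
origin, and the principal value limit exists and equals `l`. -/
def HasLAt {n : ℕ} (ν : Measure (Eucl n)) (u : Eucl n → ℝ) (x : Eucl n) (l : ℝ) : Prop :=
  (∀ ε : ℝ, 0 < ε → IntegrableOn (fun y => u x - u (x + y)) {y : Eucl n | ε ≤ ‖y‖} ν) ∧
  Tendsto (truncL ν u x) (𝓝[>] (0:ℝ)) (𝓝 l)

/-- Squared norm of the generalized Sobolev space V_ν^D(ℝⁿ). -/
def sobSq {n : ℕ} (ν : Measure (Eucl n)) (D : Set (Eucl n)) (u : Eucl n → ℝ) : ℝ≥0∞ :=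
  (∫⁻ x in D, ENNReal.ofReal (u x ^ 2)) +
    (1/2) * ∫⁻ y in D, ∫⁻ z, ENNReal.ofReal ((u y - u (y + z)) ^ 2) ∂ν

/-- Membership in V_ν^D(ℝⁿ). -/
def MemV {n : ℕ} (ν : Measure (Eucl n)) (D : Set (Eucl n)) (u : Eucl n → ℝ) : Prop :=
  Measurable u ∧ sobSq ν D u < ⊤

/-- Membership in H_ν^D(ℝⁿ): members of V_ν^D vanishing a.e. outside D. -/
def MemH {n : ℕ} (ν : Measure (Eucl n)) (D : Set (Eucl n)) (u : Eucl n → ℝ) : Prop :=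
  MemV ν D u ∧ ∀ᵐ x ∂(volume : Measure (Eucl n)), x ∉ D → u x = 0

/-- The quadratic form ⟨u,u⟩_ν (with values in [0,∞]). -/
def formQ {n : ℕ} (ν : Measure (Eucl n)) (u : Eucl n → ℝ) : ℝ≥0∞ :=
  (1/2) * ∫⁻ y, ∫⁻ z, ENNReal.ofReal ((u y - u (y + z)) ^ 2) ∂ν

/-- The bilinear form ⟨u,v⟩_ν. -/
def formB {n : ℕ} (ν : Measure (Eucl n)) (u v : Eucl n → ℝ) : ℝ :=
  (1/2) * ∫ y, (∫ z, (u y - u (y + z)) * (v y - v (y + z)) ∂ν)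

/-- Weak solution of Lu = f in Ω, u = g on ℝⁿ∖Ω. -/
def IsWeakSol {n : ℕ} (ν : Measure (Eucl n)) (Ω : Set (Eucl n))
    (f g u : Eucl n → ℝ) : Prop :=
  MemV ν Ω u ∧ (∀ᵐ x ∂(volume : Measure (Eucl n)), x ∉ Ω → u x = g x) ∧
  ∀ φ : Eucl n → ℝ, MemH ν Ω φ → formB ν u φ = ∫ x in Ω, f x * φ x

end

private lemma tail_meas {n : ℕ} (δ : ℝ) : MeasurableSet {z : Eucl n | δ ≤ ‖z‖} :=
  (isClosed_le continuous_const continuous_norm).measurableSet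

private lemma tail_lt_top {n : ℕ} (ν : Measure (Eucl n))
    (hν3 : (∫⁻ y, ENNReal.ofReal (min 1 (‖y‖ ^ 2)) ∂ν) < ⊤)
    {δ : ℝ} (hδ : 0 < δ) : ν {z : Eucl n | δ ≤ ‖z‖} < ⊤ := by
  set S := {z : Eucl n | δ ≤ ‖z‖} with hS
  have hmin : (0:ℝ) < min 1 (δ ^ 2) := lt_min one_pos (by positivity)
  have key : ENNReal.ofReal (min 1 (δ ^ 2)) * ν S ≤
      ∫⁻ y, ENNReal.ofReal (min 1 (‖y‖ ^ 2)) ∂ν := by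
    rw [← setLIntegral_const S (ENNReal.ofReal (min 1 (δ ^ 2)))]
    refine le_trans (lintegral_mono_ae ((ae_restrict_iff' (tail_meas δ)).mpr
      (ae_of_all _ fun y hy => ?_))) (setLIntegral_le_lintegral _ _)
    exact ENNReal.ofReal_le_ofReal (min_le_min le_rfl (by
      have : δ ≤ ‖y‖ := hy
      nlinarith [norm_nonneg y]))
  by_contra h
  rw [not_lt, top_le_iff] at h
  rw [h, ENNReal.mul_top (ENNReal.ofReal_pos.mpr hmin).ne'] at key
  exact absurd (top_le_iff.mp key) (by simpa using hν3.ne)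

theorem dirichlet_stmt7 {n : ℕ} (ν : Measure (Eucl n)) (hν : IsSymmLevy ν)
    (hν0 : 0 < ν ({0}ᶜ : Set (Eucl n)))
    (Ω : Set (Eucl n)) (hΩo : IsOpen Ω) (hΩne : Ω.Nonempty)
    (hΩb : Bornology.IsBounded Ω) :
    ∃ C : ℝ, 0 < C ∧ ∀ u : Eucl n → ℝ, MemH ν Ω u →
      (∫⁻ x in Ω, ENNReal.ofReal (u x ^ 2)) ≤ ENNReal.ofReal C * formQ ν u := by
  obtain ⟨hν1, hν2, hν3⟩ := hν
  -- find δ > 0 with ν {δ ≤ ‖z‖} > 0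
  obtain ⟨δ, hδ, hSpos⟩ : ∃ δ : ℝ, 0 < δ ∧ 0 < ν {z : Eucl n | δ ≤ ‖z‖} := by
    by_contra h
    push_neg at h
    have hz : ∀ m : ℕ, ν {z : Eucl n | 1/(m+1:ℝ) ≤ ‖z‖} = 0 := fun m =>
      le_antisymm (h (1/(m+1:ℝ)) (by positivity)) zero_le
    have hz' : ∀ m : ℕ, ν {z : Eucl n | ((m:ℝ)+1)⁻¹ ≤ ‖z‖} = 0 := by
      intro m; rw [← one_div]; exact hz m
    have hcover : ({0}ᶜ : Set (Eucl n)) ⊆ ⋃ m : ℕ, {z : Eucl n | 1/(m+1:ℝ) ≤ ‖z‖} := by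
      intro z hz'
      have hzpos : 0 < ‖z‖ := norm_pos_iff.mpr hz'
      obtain ⟨m, hm⟩ := exists_nat_one_div_lt hzpos
      exact mem_iUnion.mpr ⟨m, hm.le⟩
    have : ν ({0}ᶜ : Set (Eucl n)) = 0 :=
      le_antisymm (le_trans (measure_mono hcover)
        (le_trans (measure_iUnion_le _) (by simp [one_div, hz']))) zero_le
    exact absurd this hν0.ne'
  set S := {z : Eucl n | δ ≤ ‖z‖} with hSdef
  have hSmeas : MeasurableSet S := tail_meas δ
  have hSfin : ν S < ⊤ := tail_lt_top ν hν3 hδ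
  -- ν is sigma finite
  haveI : SigmaFinite ν := by
    refine ⟨⟨⟨fun m => {z : Eucl n | 1/(m+1:ℝ) ≤ ‖z‖} ∪ {0}, fun _ => trivial,
      fun m => ?_, ?_⟩⟩⟩
    · calc ν ({z : Eucl n | 1/(m+1:ℝ) ≤ ‖z‖} ∪ {0})
          ≤ ν {z : Eucl n | 1/(m+1:ℝ) ≤ ‖z‖} + ν {0} := measure_union_le _ _
        _ < ⊤ := by rw [hν1, add_zero]; exact tail_lt_top ν hν3 (by positivity)
    · refine eq_univ_of_forall fun z => ?_
      rcases eq_or_ne z 0 with rfl | hz0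
      · exact mem_iUnion.mpr ⟨0, Or.inr rfl⟩
      · obtain ⟨m, hm⟩ := exists_nat_one_div_lt (norm_pos_iff.mpr hz0)
        exact mem_iUnion.mpr ⟨m, Or.inl hm.le⟩
  -- bound Ω
  obtain ⟨R, hΩR⟩ := hΩb.subset_ball 0
  have hR : 0 < R := by
    obtain ⟨x, hx⟩ := hΩne
    have := hΩR hx
    simp only [Metric.mem_ball] at this
    exact lt_of_le_of_lt dist_nonneg this
  obtain ⟨k, hk⟩ := exists_nat_gt (2 * R / δ)
  have hkδ : 2 * R < k * δ := by
    rwa [div_lt_iff₀ hδ] at hk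
  have hkpos : 0 < k := by
    by_contra hk0
    push_neg at hk0
    interval_cases k
    simp at hkδ; nlinarith
  -- the constant
  set E : ℝ≥0∞ := (ν S)⁻¹ * (2 * (k : ℝ≥0∞) ^ 2) with hE
  have hk2ne : (2 * (k : ℝ≥0∞) ^ 2) ≠ ⊤ :=
    ENNReal.mul_ne_top ENNReal.ofNat_ne_top (ENNReal.pow_ne_top (ENNReal.natCast_ne_top k))
  have hEne : E ≠ ⊤ := by
    refine ENNReal.mul_ne_top ?_ hk2ne
    simp [ENNReal.inv_ne_top, hSpos.ne']
  have hE0 : E ≠ 0 := by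
    have h1 : (ν S)⁻¹ ≠ 0 := by simp [hSfin.ne]
    have h2 : (2 * (k : ℝ≥0∞) ^ 2) ≠ 0 := by
      simp [hkpos.ne']
    exact mul_ne_zero h1 h2
  refine ⟨E.toReal, ENNReal.toReal_pos hE0 hEne, fun u hu => ?_⟩
  obtain ⟨⟨humeas, _⟩, hu0⟩ := hu
  set I := ∫⁻ x in Ω, ENNReal.ofReal (u x ^ 2) with hI
  -- core estimate for a single z ∈ S
  have core : ∀ z ∈ S, I ≤
      (k : ℝ≥0∞) ^ 2 * ∫⁻ x, ENNReal.ofReal ((u x - u (x + z)) ^ 2) := by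
    intro z hz
    have hznorm : δ ≤ ‖z‖ := hz
    set g : Eucl n → ℝ≥0∞ := fun x => ENNReal.ofReal ((u x - u (x + z)) ^ 2) with hg
    have hgmeas : Measurable g :=
      ((humeas.sub (humeas.comp (measurable_add_const z))).pow_const 2).ennreal_ofReal
    -- pointwise bound a.e. on Ω
    have hae : ∀ᵐ x : Eucl n, x + (k : ℕ) • z ∉ Ω → u (x + (k : ℕ) • z) = 0 :=
      (measurePreserving_add_right volume ((k : ℕ) • z)).quasiMeasurePreserving.ae hu0
    have step1 : I ≤ ∫⁻ x in Ω, ENNReal.ofReal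
        ((k : ℝ) * ∑ j ∈ Finset.range k, (u (x + j • z) - u (x + (j + 1) • z)) ^ 2) := by
      refine lintegral_mono_ae ((ae_restrict_iff' hΩo.measurableSet).mpr (hae.mono
        fun x hx hxΩ => ?_))
      have hout : x + (k : ℕ) • z ∉ Ω := by
        intro hin
        have h1 : ‖x‖ < R := by simpa using hΩR hxΩ
        have h2 : ‖x + (k : ℕ) • z‖ < R := by simpa using hΩR hin
        have hns : ‖(k : ℕ) • z‖ = (k : ℝ) * ‖z‖ := by
          rw [← Nat.cast_smul_eq_nsmul ℝ k z, norm_smul]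
          simp
        have h3 : (k : ℝ) * δ ≤ ‖(k : ℕ) • z‖ := by
          rw [hns]
          exact mul_le_mul_of_nonneg_left hznorm (by positivity)
        have h4 : ‖(k : ℕ) • z‖ - ‖x‖ ≤ ‖x + (k : ℕ) • z‖ := by
          have := norm_sub_norm_le ((k : ℕ) • z) (-x)
          simpa [sub_neg_eq_add, add_comm] using this
        nlinarith
      have huk : u (x + (k : ℕ) • z) = 0 := hx hout
      have tele : u x = ∑ j ∈ Finset.range k, (u (x + j • z) - u (x + (j + 1) • z)) := by
        rw [Finset.sum_range_sub' (fun j => u (x + j • z))]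
        simp [huk]
      refine ENNReal.ofReal_le_ofReal ?_
      rw [tele]
      simpa using sq_sum_le_card_mul_sum_sq (s := Finset.range k)
        (f := fun j => u (x + j • z) - u (x + (j + 1) • z))
    have step2 : ∀ j : ℕ, (∫⁻ x, ENNReal.ofReal ((u (x + j • z) - u (x + (j + 1) • z)) ^ 2))
        = ∫⁻ x, g x := by
      intro j
      have : ∀ x : Eucl n, ENNReal.ofReal ((u (x + j • z) - u (x + (j + 1) • z)) ^ 2)
          = g (x + j • z) := by
        intro x
        simp only [hg]
        rw [succ_nsmul, ← add_assoc]
      simp_rw [this]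
      exact (measurePreserving_add_right volume (j • z)).lintegral_comp hgmeas
    calc I ≤ ∫⁻ x in Ω, ENNReal.ofReal
          ((k : ℝ) * ∑ j ∈ Finset.range k, (u (x + j • z) - u (x + (j + 1) • z)) ^ 2) := step1
      _ ≤ ∫⁻ x, ENNReal.ofReal
          ((k : ℝ) * ∑ j ∈ Finset.range k, (u (x + j • z) - u (x + (j + 1) • z)) ^ 2) :=
          setLIntegral_le_lintegral _ _
      _ = (k : ℝ≥0∞) * ∫⁻ x, ENNReal.ofReal
          (∑ j ∈ Finset.range k, (u (x + j • z) - u (x + (j + 1) • z)) ^ 2) := by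
          simp_rw [ENNReal.ofReal_mul (by positivity : (0:ℝ) ≤ (k:ℝ)), ENNReal.ofReal_natCast]
          rw [lintegral_const_mul' _ _ (ENNReal.natCast_ne_top k)]
      _ = (k : ℝ≥0∞) * ∫⁻ x, ∑ j ∈ Finset.range k,
          ENNReal.ofReal ((u (x + j • z) - u (x + (j + 1) • z)) ^ 2) := by
          congr 1
          refine lintegral_congr fun x => ?_
          exact ENNReal.ofReal_sum_of_nonneg fun j _ => by positivity
      _ = (k : ℝ≥0∞) * ∑ j ∈ Finset.range k,
          ∫⁻ x, ENNReal.ofReal ((u (x + j • z) - u (x + (j + 1) • z)) ^ 2) := by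
          congr 1
          exact lintegral_finset_sum _ fun j _ =>
            ((((humeas.comp (measurable_add_const (j • z)))).sub
              ((humeas.comp (measurable_add_const ((j + 1) • z))))).pow_const 2).ennreal_ofReal
      _ = (k : ℝ≥0∞) * ∑ j ∈ Finset.range k, ∫⁻ x, g x := by simp_rw [step2]
      _ = (k : ℝ≥0∞) ^ 2 * ∫⁻ x, g x := by
          rw [Finset.sum_const, Finset.card_range, nsmul_eq_mul]
          ring
  -- measurability on the product
  have hprod : Measurable (fun p : Eucl n × Eucl n =>
      ENNReal.ofReal ((u p.2 - u (p.2 + p.1)) ^ 2)) :=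
    (((humeas.comp measurable_snd).sub
      (humeas.comp (measurable_snd.add measurable_fst))).pow_const 2).ennreal_ofReal
  -- integrate over z ∈ S
  have main : ν S * I ≤ (k : ℝ≥0∞) ^ 2 * (2 * formQ ν u) := by
    have swap : (∫⁻ z, ∫⁻ x, ENNReal.ofReal ((u x - u (x + z)) ^ 2) ∂volume ∂ν)
        = ∫⁻ x, ∫⁻ z, ENNReal.ofReal ((u x - u (x + z)) ^ 2) ∂ν ∂volume :=
      lintegral_lintegral_swap hprod.aemeasurable
    have h2q : (∫⁻ x, ∫⁻ z, ENNReal.ofReal ((u x - u (x + z)) ^ 2) ∂ν ∂volume)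
        = 2 * formQ ν u := by
      rw [formQ, ← mul_assoc, one_div, ENNReal.mul_inv_cancel two_ne_zero ENNReal.ofNat_ne_top,
        one_mul]
    calc ν S * I = ∫⁻ _ in S, I ∂ν := by rw [setLIntegral_const, mul_comm]
      _ ≤ ∫⁻ z in S, ((k : ℝ≥0∞) ^ 2 *
          ∫⁻ x, ENNReal.ofReal ((u x - u (x + z)) ^ 2)) ∂ν :=
          setLIntegral_mono' hSmeas core
      _ ≤ ∫⁻ z, ((k : ℝ≥0∞) ^ 2 *
          ∫⁻ x, ENNReal.ofReal ((u x - u (x + z)) ^ 2)) ∂ν :=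
          setLIntegral_le_lintegral _ _
      _ = (k : ℝ≥0∞) ^ 2 * ∫⁻ z, (∫⁻ x, ENNReal.ofReal ((u x - u (x + z)) ^ 2)) ∂ν :=
          lintegral_const_mul' _ _ (ENNReal.pow_ne_top (ENNReal.natCast_ne_top k))
      _ = (k : ℝ≥0∞) ^ 2 * (2 * formQ ν u) := by rw [swap, h2q]
  -- conclude
  rw [ENNReal.ofReal_toReal hEne]
  calc I = ((ν S)⁻¹ * ν S) * I := by
        rw [ENNReal.inv_mul_cancel hSpos.ne' hSfin.ne, one_mul]
    _ = (ν S)⁻¹ * (ν S * I) := by rw [mul_assoc]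
    _ ≤ (ν S)⁻¹ * ((k : ℝ≥0∞) ^ 2 * (2 * formQ ν u)) := mul_le_mul_right main _
    _ = E * formQ ν u := by rw [hE]; ring
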